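/- Let (μ_n) be probability measures on a measurable space (S, B) converging setwise to μ, and let (f_n), (g_n) be sequences of measurable extended-real-valued functions with f_n(s) ≥ g_n(s) for all n and s, each g_n real-valued. Assume all relevant integrals are defined and that −∞ < ∫_S limsup_n g_n dμ ≤ liminf_n ∫_S g_n dμ_n. Then ∫_S liminf_n f_n(s) dμ(s) ≤ liminf_n ∫_S f_n dμ_n. -/

import Mathlib

open MeasureTheory Filter Topology ENNReal

/-- The positive part of an extended real number, as an element of `ℝ≥0∞`. -/
noncomputable def eposPart (x : EReal) : ℝ≥0∞ :=
  if x = ⊤ then ⊤ else ENNReal.ofReal x.toReal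

/-- The integral of an extended-real-valued function: `∫ f⁺ dμ − ∫ f⁻ dμ`. -/
noncomputable def eintegral {S : Type*} [MeasurableSpace S]
    (μ : MeasureTheory.Measure S) (f : S → EReal) : EReal :=
  ((∫⁻ s, eposPart (f s) ∂μ : ℝ≥0∞) : EReal) -
    ((∫⁻ s, eposPart (-f s) ∂μ : ℝ≥0∞) : EReal)

/-- The integral of an extended-real-valued function `f` is defined when
`min(∫ f⁺ dμ, ∫ f⁻ dμ) < ∞`. -/
def EIntegralDefined {S : Type*} [MeasurableSpace S]
    (μ : MeasureTheory.Measure S) (f : S → EReal) : Prop :=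
  (∫⁻ s, eposPart (f s) ∂μ) ≠ ⊤ ∨ (∫⁻ s, eposPart (-f s) ∂μ) ≠ ⊤

/-! ### Auxiliary lemmas about `eposPart` -/

lemma eposPart_coe (r : ℝ) : eposPart r = ENNReal.ofReal r := by simp [eposPart]

lemma eposPart_mono {x y : EReal} (h : x ≤ y) : eposPart x ≤ eposPart y := by
  rcases eq_or_ne y ⊤ with hy | hy
  · simp [hy, eposPart]
  · rcases eq_or_ne x ⊥ with hx | hx
    · simp [hx, eposPart]
    · have hx' : x ≠ ⊤ := fun h' => hy (top_le_iff.1 (h' ▸ h))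
      have hy' : y ≠ ⊥ := fun h' => hx (le_bot_iff.1 (h' ▸ h))
      lift x to ℝ using ⟨hx', hx⟩
      lift y to ℝ using ⟨hy, hy'⟩
      simp only [eposPart, if_neg (EReal.coe_ne_top _), EReal.toReal_coe]
      exact ENNReal.ofReal_le_ofReal (EReal.coe_le_coe_iff.1 h)

lemma measurable_eposPart : Measurable eposPart := by
  unfold eposPart
  refine Measurable.ite ?_ measurable_const
    (ENNReal.measurable_ofReal.comp measurable_ereal_toReal)
  rw [Set.setOf_eq_eq_singleton]
  exact measurableSet_singleton _

lemma eposPart_key (L : EReal) (D : ℝ≥0∞) (hL : L ≠ ⊥) :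
    eposPart (L + (D : EReal)) + eposPart (-L)
      = (eposPart L + D) + eposPart (-(L + (D : EReal))) := by
  induction L with
  | bot => exact absurd rfl hL
  | top =>
      have h1 : (⊤ : EReal) + (D : EReal) = ⊤ :=
        EReal.top_add_of_ne_bot (EReal.coe_ennreal_ne_bot D)
      simp [h1, eposPart]
  | coe l =>
      rcases eq_or_ne D ⊤ with hD | hD
      · subst hD
        have h1 : (l : EReal) + ((⊤ : ℝ≥0∞) : EReal) = ⊤ := by
          rw [EReal.coe_ennreal_top]; exact EReal.coe_add_top l
        simp [h1, eposPart]
      · obtain ⟨d, hd0, rfl⟩ : ∃ d : ℝ, 0 ≤ d ∧ D = ENNReal.ofReal d :=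
          ⟨D.toReal, ENNReal.toReal_nonneg, (ENNReal.ofReal_toReal hD).symm⟩
        have hDr : ((ENNReal.ofReal d : ℝ≥0∞) : EReal) = ((d : ℝ) : EReal) := by
          rw [EReal.coe_ennreal_ofReal, max_eq_left hd0]
        rw [hDr, ← EReal.coe_add, ← EReal.coe_neg, ← EReal.coe_neg,
          eposPart_coe, eposPart_coe, eposPart_coe, eposPart_coe]
        rcases le_total 0 l with hl | hl <;> rcases le_total 0 (l + d) with hld | hld
        · rw [ENNReal.ofReal_of_nonpos (neg_nonpos.2 hl),
            ENNReal.ofReal_of_nonpos (neg_nonpos.2 hld),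
            ← ENNReal.ofReal_add hl hd0]
        · have h0 : l = 0 := le_antisymm (by linarith) hl
          have h0' : d = 0 := by linarith
          simp [h0, h0']
        · rw [ENNReal.ofReal_of_nonpos hl, ENNReal.ofReal_of_nonpos (neg_nonpos.2 hld),
            ← ENNReal.ofReal_add hld (neg_nonneg.2 hl), add_zero, zero_add]
          congr 1; ring
        · rw [ENNReal.ofReal_of_nonpos hld, ENNReal.ofReal_of_nonpos hl,
            zero_add, zero_add, ← ENNReal.ofReal_add hd0 (neg_nonneg.2 hld)]
          congr 1; ring

lemma coe_ennreal_fin {x : ℝ≥0∞} (hx : x ≠ ⊤) :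
    ((x : EReal)) = ((x.toReal : ℝ) : EReal) := by
  conv_lhs => rw [← ENNReal.ofReal_toReal hx]
  rw [EReal.coe_ennreal_ofReal, max_eq_left ENNReal.toReal_nonneg]

lemma ereal_alg (a b p c q : ℝ≥0∞) (hb : b ≠ ⊤) (hq : q ≠ ⊤)
    (h : a + b = (p + c) + q) :
    (a : EReal) - (q : EReal) = ((p : EReal) - (b : EReal)) + (c : EReal) := by
  rcases eq_or_ne a ⊤ with ha | ha
  · have hpc : p + c = ⊤ := by
      by_contra hpc
      have h1 : (p + c) + q ≠ ⊤ := ENNReal.add_ne_top.2 ⟨hpc, hq⟩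
      rw [← h] at h1
      exact h1 (by simp [ha])
    rw [ha, coe_ennreal_fin hq, EReal.coe_ennreal_top, EReal.top_sub_coe]
    rcases ENNReal.add_eq_top.1 hpc with hp | hc
    · rw [hp, EReal.coe_ennreal_top, coe_ennreal_fin hb, EReal.top_sub_coe,
        EReal.top_add_of_ne_bot (EReal.coe_ennreal_ne_bot c)]
    · have hne : ((p : EReal) - (b : EReal)) ≠ ⊥ := by
        rw [coe_ennreal_fin hb]
        rcases eq_or_ne p ⊤ with hp | hp
        · rw [hp, EReal.coe_ennreal_top, EReal.top_sub_coe]; exact top_ne_bot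
        · rw [coe_ennreal_fin hp, ← EReal.coe_sub]; exact EReal.coe_ne_bot _
      rw [hc, EReal.coe_ennreal_top, EReal.add_top_of_ne_bot hne]
  · have h1 : (p + c) + q ≠ ⊤ := by rw [← h]; exact ENNReal.add_ne_top.2 ⟨ha, hb⟩
    have hpc : p + c ≠ ⊤ := (ENNReal.add_ne_top.1 h1).1
    have hp : p ≠ ⊤ := (ENNReal.add_ne_top.1 hpc).1
    have hc : c ≠ ⊤ := (ENNReal.add_ne_top.1 hpc).2
    have hre : a.toReal + b.toReal = (p.toReal + c.toReal) + q.toReal := by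
      rw [← ENNReal.toReal_add ha hb, ← ENNReal.toReal_add hp hc,
        ← ENNReal.toReal_add hpc hq, h]
    rw [coe_ennreal_fin ha, coe_ennreal_fin hb, coe_ennreal_fin hp, coe_ennreal_fin hc,
      coe_ennreal_fin hq, ← EReal.coe_sub, ← EReal.coe_sub, ← EReal.coe_add,
      EReal.coe_eq_coe_iff]
    linarith

/-! ### Basic lemmas about `eintegral` -/

lemma eintegral_mono_ae {S : Type*} [MeasurableSpace S] {ν : Measure S}
    {F G : S → EReal} (h : ∀ᵐ s ∂ν, F s ≤ G s) :
    eintegral ν F ≤ eintegral ν G := by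
  refine EReal.sub_le_sub ?_ ?_
  · exact EReal.coe_ennreal_le_coe_ennreal_iff.2 <|
      lintegral_mono_ae (h.mono fun s hs => eposPart_mono hs)
  · exact EReal.coe_ennreal_le_coe_ennreal_iff.2 <|
      lintegral_mono_ae (h.mono fun s hs => eposPart_mono (EReal.neg_le_neg_iff.2 hs))

lemma eintegral_eq_bot {S : Type*} [MeasurableSpace S] (ν : Measure S)
    {F : S → EReal} (h : ∫⁻ s, eposPart (-F s) ∂ν = ⊤) :
    eintegral ν F = ⊥ := by
  rw [eintegral, h, EReal.coe_ennreal_top, EReal.sub_top]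

lemma ae_ne_bot {S : Type*} [MeasurableSpace S] {ν : Measure S}
    {F : S → EReal} (hF : Measurable F) (h : ∫⁻ s, eposPart (-F s) ∂ν ≠ ⊤) :
    ∀ᵐ s ∂ν, F s ≠ ⊥ := by
  set A : Set S := F ⁻¹' {⊥} with hA
  have hAm : MeasurableSet A := hF (measurableSet_singleton _)
  have hle : ∀ s, A.indicator (fun _ => (⊤ : ℝ≥0∞)) s ≤ eposPart (-F s) := by
    intro s
    by_cases hs : s ∈ A
    · have : F s = ⊥ := hs
      simp [Set.indicator_of_mem hs, this, eposPart]
    · simp [Set.indicator_of_notMem hs]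
  have h2 : ⊤ * ν A ≤ ∫⁻ s, eposPart (-F s) ∂ν := by
    calc ⊤ * ν A = ∫⁻ s, A.indicator (fun _ => (⊤ : ℝ≥0∞)) s ∂ν := by
          rw [lintegral_indicator hAm, setLIntegral_const]
      _ ≤ _ := lintegral_mono hle
  have hνA : ν A = 0 := by
    by_contra hν
    rw [ENNReal.top_mul hν] at h2
    exact h (top_le_iff.1 h2)
  rw [ae_iff]
  convert hνA using 2
  ext s
  simp [hA]

/-- Key additivity: `∫ (L + D) = ∫ L + ∫ D` for `D : S → ℝ≥0∞`, provided
`L` is a.e. not `⊥` and its negative part has finite integral. -/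
lemma eintegral_add_ennreal {S : Type*} [MeasurableSpace S] (ν : Measure S)
    {L : S → EReal} {D : S → ℝ≥0∞} (hL : Measurable L) (hD : Measurable D)
    (hbot : ∀ᵐ s ∂ν, L s ≠ ⊥) (hfin : ∫⁻ s, eposPart (-L s) ∂ν ≠ ⊤) :
    eintegral ν (fun s => L s + (D s : EReal))
      = eintegral ν L + ((∫⁻ s, D s ∂ν : ℝ≥0∞) : EReal) := by
  set F : S → EReal := fun s => L s + (D s : EReal) with hFdef
  have hLF : ∀ s, L s ≤ F s := fun s => le_add_of_nonneg_right (EReal.coe_ennreal_nonneg _)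
  have hq : ∫⁻ s, eposPart (-F s) ∂ν ≠ ⊤ := by
    refine ne_top_of_le_ne_top hfin (lintegral_mono fun s => ?_)
    exact eposPart_mono (EReal.neg_le_neg_iff.2 (hLF s))
  have hkey : ∀ᵐ s ∂ν, eposPart (F s) + eposPart (-L s)
      = (eposPart (L s) + D s) + eposPart (-F s) :=
    hbot.mono fun s hs => eposPart_key (L s) (D s) hs
  have hint : ∫⁻ s, (eposPart (F s) + eposPart (-L s)) ∂ν
      = ∫⁻ s, ((eposPart (L s) + D s) + eposPart (-F s)) ∂ν := lintegral_congr_ae hkey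
  have hmL : Measurable fun s => eposPart (L s) := measurable_eposPart.comp hL
  have hmLn : Measurable fun s => eposPart (-L s) := measurable_eposPart.comp hL.neg
  rw [lintegral_add_right _ hmLn, lintegral_add_left (f := fun s => eposPart (L s) + D s) (hmL.add hD),
    lintegral_add_left hmL] at hint
  exact ereal_alg _ _ _ _ _ hfin hq hint

/-! ### Setwise convergence lemmas -/

section setwise
variable {S : Type*} [MeasurableSpace S] {μs : ℕ → Measure S} {μ : Measure S}

lemma simple_tendsto (hsetwise : ∀ A : Set S, MeasurableSet A →
      Tendsto (fun n => μs n A) atTop (𝓝 (μ A))) (ψ : SimpleFunc S ℝ≥0∞)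
    (hψ : ∀ x ∈ ψ.range, x ≠ ⊤) :
    Tendsto (fun n => ψ.lintegral (μs n)) atTop (𝓝 (ψ.lintegral μ)) := by
  simp only [SimpleFunc.lintegral]
  refine tendsto_finset_sum _ fun x hx => ?_
  exact ENNReal.Tendsto.const_mul (hsetwise _ (ψ.measurableSet_preimage _))
    (Or.inr (hψ x hx))

lemma single_fatou (hsetwise : ∀ A : Set S, MeasurableSet A →
      Tendsto (fun n => μs n A) atTop (𝓝 (μ A))) (H : S → ℝ≥0∞) :
    ∫⁻ s, H s ∂μ ≤ liminf (fun n => ∫⁻ s, H s ∂(μs n)) atTop := by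
  rw [lintegral_eq_nnreal H μ]
  refine iSup₂_le fun φ hφ => ?_
  have h1 : Tendsto (fun n => (φ.map ((↑) : NNReal → ℝ≥0∞)).lintegral (μs n)) atTop
      (𝓝 ((φ.map ((↑) : NNReal → ℝ≥0∞)).lintegral μ)) := by
    refine simple_tendsto hsetwise _ fun x hx => ?_
    rw [SimpleFunc.mem_range] at hx
    obtain ⟨s, hs⟩ := hx
    simp only [SimpleFunc.coe_map, Function.comp_apply] at hs
    exact hs ▸ ENNReal.coe_ne_top
  have h2 : ∀ n, (φ.map ((↑) : NNReal → ℝ≥0∞)).lintegral (μs n) ≤ ∫⁻ s, H s ∂(μs n) := by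
    intro n
    rw [← SimpleFunc.lintegral_eq_lintegral]
    exact lintegral_mono fun s => by simpa using hφ s
  exact h1.liminf_eq ▸ liminf_le_liminf (Eventually.of_forall h2)

lemma seq_fatou (hsetwise : ∀ A : Set S, MeasurableSet A →
      Tendsto (fun n => μs n A) atTop (𝓝 (μ A))) (h : ℕ → S → ℝ≥0∞)
    (hm : ∀ n, Measurable (h n)) :
    ∫⁻ s, liminf (fun n => h n s) atTop ∂μ
      ≤ liminf (fun n => ∫⁻ s, h n s ∂(μs n)) atTop := by
  have hpt : ∀ s, liminf (fun n => h n s) atTop = ⨆ m, ⨅ i, h (i + m) s := fun s =>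
    liminf_eq_iSup_iInf_of_nat'
  calc ∫⁻ s, liminf (fun n => h n s) atTop ∂μ
      = ∫⁻ s, ⨆ m, ⨅ i, h (i + m) s ∂μ := lintegral_congr hpt
    _ = ⨆ m, ∫⁻ s, ⨅ i, h (i + m) s ∂μ := by
        refine lintegral_iSup (fun m => ?_) ?_
        · exact Measurable.iInf fun i => hm _
        · intro m m' hmm s
          exact le_iInf fun i => by
            have := iInf_le (fun i => h (i + m) s) (i + (m' - m))
            calc (⨅ i, h (i + m) s) ≤ h (i + (m' - m) + m) s := this
              _ = h (i + m') s := by congr 1; omega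
    _ ≤ liminf (fun n => ∫⁻ s, h n s ∂(μs n)) atTop := by
        refine iSup_le fun m => ?_
        refine (single_fatou hsetwise _).trans ?_
        refine liminf_le_liminf ?_
        filter_upwards [eventually_ge_atTop m] with n hn
        refine lintegral_mono fun s => ?_
        have := iInf_le (fun i => h (i + m) s) (n - m)
        calc (⨅ i, h (i + m) s) ≤ h (n - m + m) s := this
          _ = h n s := by congr 1; omega
end setwise

lemma liminf_coe_ennreal (u : ℕ → ℝ≥0∞) :
    liminf (fun n => ((u n : EReal))) atTop = ((liminf u atTop : ℝ≥0∞) : EReal) := by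
  have hmono : Monotone ((↑) : ℝ≥0∞ → EReal) := fun x y h =>
    EReal.coe_ennreal_le_coe_ennreal_iff.2 h
  exact (hmono.map_liminf_of_continuousAt u
    continuous_coe_ennreal_ereal.continuousAt).symm


/-- Fatou's lemma for setwise converging probability measures and functions
bounded below by functions `g_n` satisfying a uniform-integrability-type
condition (Theorem 2). -/
theorem fatou_setwise_unbounded_below
    {S : Type*} [MeasurableSpace S]
    (μs : ℕ → Measure S) (μ : Measure S)
    [∀ n, IsProbabilityMeasure (μs n)] [IsProbabilityMeasure μ]
    (hsetwise : ∀ A : Set S, MeasurableSet A →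
      Tendsto (fun n => μs n A) atTop (𝓝 (μ A)))
    (f : ℕ → S → EReal) (hf : ∀ n, Measurable (f n))
    (g : ℕ → S → ℝ) (hg : ∀ n, Measurable (g n))
    (hfg : ∀ n s, (g n s : EReal) ≤ f n s)
    (hdf : ∀ n, EIntegralDefined (μs n) (f n))
    (hdliminf : EIntegralDefined μ (fun s => liminf (fun n => f n s) atTop))
    (hdg : ∀ n, EIntegralDefined (μs n) (fun s => (g n s : EReal)))
    (hdlimsupg : EIntegralDefined μ (fun s => limsup (fun n => (g n s : EReal)) atTop))
    (hbound : ⊥ < eintegral μ (fun s => limsup (fun n => (g n s : EReal)) atTop))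
    (hle : eintegral μ (fun s => limsup (fun n => (g n s : EReal)) atTop) ≤
      liminf (fun n => eintegral (μs n) (fun s => (g n s : EReal))) atTop) :
    eintegral μ (fun s => liminf (fun n => f n s) atTop) ≤
      liminf (fun n => eintegral (μs n) (f n)) atTop := by
  classical
  set Lsup : S → EReal := fun s => limsup (fun n => (g n s : EReal)) atTop with hLsup
  set d : ℕ → S → ℝ≥0∞ := fun n s =>
    if f n s = ⊤ then ⊤ else ENNReal.ofReal ((f n s).toReal - g n s) with hd
  have hdm : ∀ n, Measurable (d n) := by
    intro n
    refine Measurable.ite ?_ measurable_const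
      (ENNReal.measurable_ofReal.comp ((hf n).ereal_toReal.sub (hg n)))
    exact (hf n) (measurableSet_singleton ⊤)
  have hfne_bot : ∀ n s, f n s ≠ ⊥ := fun n s h =>
    EReal.coe_ne_bot (g n s) (le_bot_iff.1 (h ▸ hfg n s))
  have hcoe_d : ∀ n s, ((d n s : EReal)) = f n s - (g n s : EReal) := by
    intro n s
    by_cases h : f n s = ⊤
    · simp [hd, h, EReal.top_sub_coe]
    · have hge : g n s ≤ (f n s).toReal := by
        have h2 := hfg n s
        conv_rhs at h2 => rw [← EReal.coe_toReal h (hfne_bot n s)]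
        exact EReal.coe_le_coe_iff.1 h2
      simp only [hd, if_neg h]
      rw [EReal.coe_ennreal_ofReal, max_eq_left (by linarith), EReal.coe_sub]
      conv_rhs => rw [← EReal.coe_toReal h (hfne_bot n s)]
  have hf_eq : ∀ n s, f n s = (g n s : EReal) + (d n s : EReal) := by
    intro n s
    rw [hcoe_d n s, add_comm]
    exact (EReal.sub_add_cancel).symm
  set D : S → ℝ≥0∞ := fun s => liminf (fun n => d n s) atTop with hD
  have hDm : Measurable D := Measurable.liminf hdm
  have hLm : Measurable Lsup := Measurable.limsup fun n => measurable_coe_real_ereal.comp (hg n)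
  have hfinL : ∫⁻ s, eposPart (-Lsup s) ∂μ ≠ ⊤ := by
    intro htop
    have hb := eintegral_eq_bot μ (F := Lsup) htop
    rw [hb] at hbound
    exact lt_irrefl _ hbound
  have hbotL : ∀ᵐ s ∂μ, Lsup s ≠ ⊥ := ae_ne_bot hLm hfinL
  have hpt : ∀ᵐ s ∂μ, liminf (fun n => f n s) atTop ≤ Lsup s + (D s : EReal) := by
    filter_upwards [hbotL] with s hs
    have h1 : (fun n => f n s)
        = (fun n => (g n s : EReal)) + (fun n => (d n s : EReal)) :=
      funext fun n => hf_eq n s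
    rw [h1]
    have h2 := EReal.liminf_add_le (f := atTop) (u := fun n => (g n s : EReal))
      (v := fun n => (d n s : EReal)) (Or.inl hs)
      (Or.inr (by rw [liminf_coe_ennreal]; exact EReal.coe_ennreal_ne_bot _))
    refine h2.trans ?_
    rw [liminf_coe_ennreal]
  have hDle : ((∫⁻ s, D s ∂μ : ℝ≥0∞) : EReal)
      ≤ liminf (fun n => ((∫⁻ s, d n s ∂(μs n) : ℝ≥0∞) : EReal)) atTop := by
    rw [liminf_coe_ennreal]
    exact EReal.coe_ennreal_le_coe_ennreal_iff.2 (seq_fatou hsetwise d hdm)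
  have hper : ∀ n, eintegral (μs n) (fun s => (g n s : EReal))
      + ((∫⁻ s, d n s ∂(μs n) : ℝ≥0∞) : EReal) ≤ eintegral (μs n) (f n) := by
    intro n
    by_cases hgn : ∫⁻ s, eposPart (-((g n s : EReal))) ∂(μs n) = ⊤
    · have hb : eintegral (μs n) (fun s => (g n s : EReal)) = ⊥ :=
        eintegral_eq_bot _ hgn
      rw [hb, EReal.bot_add]
      exact bot_le
    · have h3 := eintegral_add_ennreal (μs n) (L := fun s => (g n s : EReal))
        (D := d n) (measurable_coe_real_ereal.comp (hg n)) (hdm n)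
        (Eventually.of_forall fun s => EReal.coe_ne_bot _) hgn
      rw [← h3]
      refine le_of_eq (congrArg _ ?_)
      exact funext fun s => (hf_eq n s).symm
  calc eintegral μ (fun s => liminf (fun n => f n s) atTop)
      ≤ eintegral μ (fun s => Lsup s + (D s : EReal)) := eintegral_mono_ae hpt
    _ = eintegral μ Lsup + ((∫⁻ s, D s ∂μ : ℝ≥0∞) : EReal) :=
        eintegral_add_ennreal μ hLm hDm hbotL hfinL
    _ ≤ liminf (fun n => eintegral (μs n) (fun s => (g n s : EReal))) atTop
        + liminf (fun n => ((∫⁻ s, d n s ∂(μs n) : ℝ≥0∞) : EReal)) atTop :=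
        add_le_add hle hDle
    _ ≤ liminf ((fun n => eintegral (μs n) (fun s => (g n s : EReal)))
        + (fun n => ((∫⁻ s, d n s ∂(μs n) : ℝ≥0∞) : EReal))) atTop :=
        EReal.le_liminf_add
    _ ≤ liminf (fun n => eintegral (μs n) (f n)) atTop :=
        liminf_le_liminf (Eventually.of_forall fun n => hper n)
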